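/- Let r ≥ 2, l ≥ 1, and k ≥ 2 be integers, and let T_{r,l} be the perfect r-ary tree of height l with levels numbered 1 (leaves) through l+1 (root). Let V' be the set of all vertices of T_{r,l} lying on a level that is an integer multiple of ⌈k/2⌉+1. Then every connected component of T_{r,l} − V' is a perfect r-ary tree of height at most ⌈k/2⌉−1; in particular every component of T_{r,l} − V' has diameter at most k−1, so T_{r,l} − V' is in a failure state for k. -/

import Mathlib

open SimpleGraph

/-- A graph is in a *failure state* for `k` if every connected component has
diameter less than `k`, i.e. every pair of mutually reachable vertices is at
distance less than `k`. -/
def FailureState {V : Type*} (G : SimpleGraph V) (k : ℕ) : Prop :=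
  ∀ u v : V, G.Reachable u v → G.dist u v < k

/-- `G` contains `m` pairwise vertex-disjoint paths of length `k`. -/
def HasDisjointPaths {V : Type*} (G : SimpleGraph V) (k m : ℕ) : Prop :=
  ∃ (u v : Fin m → V) (P : ∀ i, G.Walk (u i) (v i)),
    (∀ i, (P i).IsPath ∧ (P i).length = k) ∧
    ∀ i j, i ≠ j → ∀ x, x ∈ (P i).support → x ∉ (P j).support

/-- The `k`-diameter component vertex connectivity: the minimum size of a set of
vertices whose deletion leaves every component with diameter less than `k`. -/
noncomputable def CV {V : Type*} (G : SimpleGraph V) (k : ℕ) : ℕ :=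
  sInf {n | ∃ V' : Finset V, V'.card = n ∧
    FailureState (G.induce ((V' : Set V))ᶜ) k}

/-- The `k`-diameter component edge connectivity: the minimum size of a set of
edges whose deletion leaves every component with diameter less than `k`. -/
noncomputable def CE {V : Type*} (G : SimpleGraph V) (k : ℕ) : ℕ :=
  sInf {n | ∃ E' : Finset (Sym2 V), (E' : Set (Sym2 V)) ⊆ G.edgeSet ∧ E'.card = n ∧
    FailureState (G.deleteEdges (E' : Set (Sym2 V))) k}

/-- The `k`-diameter component connectivity function: the minimum over all
`p`-element vertex sets `V'` of `CE k (G - V')`. -/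
noncomputable def CM {V : Type*} (G : SimpleGraph V) (k p : ℕ) : ℕ :=
  sInf {q | ∃ V' : Finset V, V'.card = p ∧
    CE (G.induce ((V' : Set V))ᶜ) k = q}

/-- Vertices of the perfect `r`-ary tree of height `l`: words over `Fin r` of
length at most `l`. The root is the empty word, a vertex at depth `d` is a word
of length `d`, and the leaves are the words of length `l`. -/
def RAryVert (r l : ℕ) : Type := {ws : List (Fin r) // ws.length ≤ l}

/-- The perfect `r`-ary tree of height `l`: two vertices are adjacent iff one is
the parent of the other, i.e. one word is obtained from the other by removing
its head letter. -/
def raryTree (r l : ℕ) : SimpleGraph (RAryVert r l) where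
  Adj u v := (∃ a : Fin r, (u.val : List (Fin r)) = a :: v.val) ∨
             (∃ a : Fin r, (v.val : List (Fin r)) = a :: u.val)
  symm := by
    constructor
    intro u v h
    tauto
  loopless := by
    constructor
    intro u h
    rcases h with ⟨a, h⟩ | ⟨a, h⟩ <;>
      · apply_fun List.length at h
        simp at h

/-- The level of a vertex of `RAryVert r l`: leaves are on level `1` and the
root is on level `l + 1`. -/
def level {r l : ℕ} (w : RAryVert r l) : ℕ := l + 1 - w.val.length

namespace RAryAux

lemma raryTree_adj {r l : ℕ} (u v : RAryVert r l) :
    (raryTree r l).Adj u v ↔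
      ((∃ a : Fin r, u.val = a :: v.val) ∨ (∃ a : Fin r, v.val = a :: u.val)) := Iff.rfl

lemma induce_adj' {V : Type*} (G : SimpleGraph V) (s : Set V) (a b : ↥s) :
    (G.induce s).Adj a b ↔ G.Adj a.val b.val := Iff.rfl

variable {r l h : ℕ}

def S (r l h : ℕ) : Set (RAryVert r l) := {w | ¬ (h + 1) ∣ level w}

def dd (h : ℕ) {r l : ℕ} (u : RAryVert r l) : ℕ :=
  min (h - level u % (h + 1)) u.val.length

def croot (h : ℕ) {r l : ℕ} (u : RAryVert r l) : List (Fin r) :=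
  u.val.drop (dd h u)

lemma level_add (u : RAryVert r l) : level u + u.val.length = l + 1 := by
  have := u.2; unfold level; omega

lemma sres_pos {u : RAryVert r l} (hu : u ∈ S r l h) : 1 ≤ level u % (h + 1) :=
  Nat.pos_of_ne_zero fun e => hu (Nat.dvd_of_mod_eq_zero e)

lemma sres_le (u : RAryVert r l) : level u % (h + 1) ≤ h :=
  Nat.lt_succ_iff.mp (Nat.mod_lt _ (Nat.succ_pos h))

lemma dd_le_len (u : RAryVert r l) : dd h u ≤ u.val.length := min_le_right _ _

lemma croot_len (u : RAryVert r l) : (croot h u).length = u.val.length - dd h u := by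
  simp [croot]

def crv (h : ℕ) {r l : ℕ} (u : RAryVert r l) : RAryVert r l :=
  ⟨croot h u, by rw [croot_len]; have := u.2; omega⟩

lemma crv_level (u : RAryVert r l) : level (crv h u) = level u + dd h u := by
  have h1 := level_add u
  have h2 := level_add (crv h u)
  have h3 : (crv h u).val.length = u.val.length - dd h u := croot_len u
  have h4 := dd_le_len (h := h) u
  omega

lemma dd_add_sres_le {u : RAryVert r l} (hu : u ∈ S r l h) :
    level u % (h + 1) + dd h u ≤ h := by
  have h1 : dd h u ≤ h - level u % (h + 1) := min_le_left _ _
  have h2 := sres_le (h := h) u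
  omega

lemma crv_sres {u : RAryVert r l} (hu : u ∈ S r l h) :
    level (crv h u) % (h + 1) = level u % (h + 1) + dd h u := by
  have h1 := dd_add_sres_le hu
  rw [crv_level, Nat.add_mod, Nat.mod_eq_of_lt (show dd h u < h + 1 by omega),
    Nat.mod_eq_of_lt (by omega)]

lemma crv_mem {u : RAryVert r l} (hu : u ∈ S r l h) : crv h u ∈ S r l h := by
  intro hdvd
  have h1 := crv_sres hu
  have h2 := sres_pos hu
  have h3 : level (crv h u) % (h + 1) = 0 := Nat.mod_eq_zero_of_dvd hdvd
  omega


lemma croot_cons {a : Fin r} {u v : RAryVert r l}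
    (hu : u ∈ S r l h) (hv : v ∈ S r l h) (huv : u.val = a :: v.val) :
    dd h u = dd h v + 1 ∧ croot h u = croot h v := by
  have hlen : u.val.length = v.val.length + 1 := by rw [huv]; simp
  have h1 := level_add u
  have h2 := level_add v
  have hlv : level v = level u + 1 := by omega
  have hsu := sres_pos hu
  have hsv := sres_pos hv
  have hsu' := sres_le (h := h) u
  have hmod : level v % (h + 1) = (level u % (h + 1) + 1) % (h + 1) := by
    rw [hlv, Nat.add_mod, Nat.mod_eq_of_lt (show 1 < h + 1 by omega)]
  have hsuh : level u % (h + 1) < h := by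
    rcases Nat.lt_or_ge (level u % (h + 1)) h with h' | h'
    · exact h'
    · exfalso
      have he : level u % (h + 1) = h := le_antisymm hsu' h'
      rw [he] at hmod
      simp at hmod
      omega
  have hsv_eq : level v % (h + 1) = level u % (h + 1) + 1 := by
    rw [hmod, Nat.mod_eq_of_lt (by omega)]
  have hdd : dd h u = dd h v + 1 := by
    unfold dd
    rw [hsv_eq, hlen]
    omega
  refine ⟨hdd, ?_⟩
  unfold croot
  rw [hdd, huv, List.drop_succ_cons]

lemma tail_mem {a : Fin r} {t : List (Fin r)} {u : RAryVert r l}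
    (hu : u ∈ S r l h) (hd : 0 < dd h u) (hat : u.val = a :: t)
    (htl : t.length ≤ l) : (⟨t, htl⟩ : RAryVert r l) ∈ S r l h := by
  intro hdvd
  set tv : RAryVert r l := ⟨t, htl⟩
  have hlen : u.val.length = t.length + 1 := by rw [hat]; simp
  have h1 := level_add u
  have h2 := level_add tv
  have hlv : level tv = level u + 1 := by
    simp only [tv] at h2 ⊢; omega
  have hsu := sres_pos hu
  have hsu' := sres_le (h := h) u
  have hsuh : level u % (h + 1) < h := by
    have : dd h u ≤ h - level u % (h + 1) := min_le_left _ _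
    omega
  have hmod : level tv % (h + 1) = level u % (h + 1) + 1 := by
    rw [hlv, Nat.add_mod, Nat.mod_eq_of_lt (show 1 < h + 1 by omega),
      Nat.mod_eq_of_lt (by omega)]
  have h3 : level tv % (h + 1) = 0 := Nat.mod_eq_zero_of_dvd hdvd
  omega

lemma walkUp : ∀ (n : ℕ) (u : RAryVert r l) (hu : u ∈ S r l h) (hn : dd h u = n)
    (v : RAryVert r l) (hv : v ∈ S r l h) (hveq : v.val = croot h u),
    ∃ W : ((raryTree r l).induce (S r l h)).Walk ⟨u, hu⟩ ⟨v, hv⟩, W.length = n := by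
  intro n
  induction n with
  | zero =>
    intro u hu hn v hv hveq
    have huv : v = u := Subtype.ext (by rw [hveq]; unfold croot; rw [hn]; simp)
    subst huv
    exact ⟨Walk.nil, rfl⟩
  | succ n ih =>
    intro u hu hn v hv hveq
    have hd : 0 < dd h u := by omega
    have hlen : 0 < u.val.length := lt_of_lt_of_le hd (dd_le_len u)
    obtain ⟨a, t, hat⟩ : ∃ a t, u.val = a :: t := by
      cases hcv : u.val with
      | nil => rw [hcv] at hlen; simp at hlen
      | cons a t => exact ⟨a, t, rfl⟩
    have htl : t.length ≤ l := by
      have := u.2; rw [hat] at this; simp at this; omega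
    have htv : (⟨t, htl⟩ : RAryVert r l) ∈ S r l h := tail_mem hu hd hat htl
    have hcc := croot_cons (v := ⟨t, htl⟩) hu htv hat
    obtain ⟨W, hW⟩ := ih ⟨t, htl⟩ htv (by omega) v hv (by rw [hveq, hcc.2])
    have hadj : ((raryTree r l).induce (S r l h)).Adj ⟨u, hu⟩ ⟨⟨t, htl⟩, htv⟩ := by
      show (raryTree r l).Adj u ⟨t, htl⟩
      exact Or.inl ⟨a, hat⟩
    exact ⟨Walk.cons hadj W, by simp [hW]⟩

lemma reach_of_croot_eq {u v : RAryVert r l} (hu : u ∈ S r l h) (hv : v ∈ S r l h)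
    (hc : croot h u = croot h v) :
    ∃ W : ((raryTree r l).induce (S r l h)).Walk ⟨u, hu⟩ ⟨v, hv⟩,
      W.length = dd h u + dd h v := by
  obtain ⟨W1, hW1⟩ := walkUp (dd h u) u hu rfl (crv h u) (crv_mem hu) rfl
  obtain ⟨W2, hW2⟩ := walkUp (dd h v) v hv rfl (crv h u)
    (crv_mem hu) hc
  exact ⟨W1.append W2.reverse, by simp [hW1, hW2]⟩

lemma croot_eq_of_reachable {x y : ↥(S r l h)}
    (hr : ((raryTree r l).induce (S r l h)).Reachable x y) :
    croot h x.val = croot h y.val := by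
  obtain ⟨W⟩ := hr
  induction W with
  | nil => rfl
  | cons hadj W ih =>
    rename_i a b c
    have : (raryTree r l).Adj a.val b.val := hadj
    rcases this with ⟨x0, hx0⟩ | ⟨x0, hx0⟩
    · rw [(croot_cons a.2 b.2 hx0).2]; exact ih
    · rw [← (croot_cons b.2 a.2 hx0).2]; exact ih


lemma croot_len_le (u : RAryVert r l) : (croot h u).length ≤ l := by
  rw [croot_len]; have := u.2; omega

lemma dd_le_h {u : RAryVert r l} (hu : u ∈ S r l h) : dd h u ≤ h - 1 := by
  have h1 := sres_pos hu
  have h2 : dd h u ≤ h - level u % (h + 1) := min_le_left _ _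
  omega

lemma rootprop {u : RAryVert r l} (hu : u ∈ S r l h) :
    level (crv h u) % (h + 1) = h ∨ croot h u = [] := by
  have hs := sres_le (h := h) u
  rcases le_total (h - level u % (h + 1)) u.val.length with hc | hc
  · left
    rw [crv_sres hu]
    have : dd h u = h - level u % (h + 1) := min_eq_left hc
    omega
  · right
    have he : dd h u = u.val.length := min_eq_right hc
    unfold croot
    rw [he, List.drop_length]

lemma decomp_of_croot {u : RAryVert r l} (hu : u ∈ S r l h) :
    u.val = u.val.take (dd h u) ++ croot h u ∧
      dd h u ≤ level (crv h u) % (h + 1) - 1 ∧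
      dd h u ≤ l - (croot h u).length := by
  refine ⟨(List.take_append_drop _ _).symm, ?_, ?_⟩
  · rw [crv_sres hu]; have := sres_pos hu; omega
  · rw [croot_len]; have := u.2; have := dd_le_len (h := h) u; omega

lemma decomp_to_croot {w : RAryVert r l} (hw : w ∈ S r l h) (p : List (Fin r))
    (hp1 : p.length ≤ level (crv h w) % (h + 1) - 1)
    (hp2 : p.length ≤ l - (croot h w).length)
    (hlen : (p ++ croot h w).length ≤ l) :
    (⟨p ++ croot h w, hlen⟩ : RAryVert r l) ∈ S r l h ∧
      dd h (⟨p ++ croot h w, hlen⟩ : RAryVert r l) = p.length ∧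
      croot h (⟨p ++ croot h w, hlen⟩ : RAryVert r l) = croot h w := by
  set v : RAryVert r l := ⟨p ++ croot h w, hlen⟩ with hv
  have hsr1 := sres_pos (crv_mem hw)
  have hsr2 := sres_le (h := h) (crv h w)
  have h3 : v.val.length = p.length + (croot h w).length := by simp [hv]
  have hlv : level v = level (crv h w) - p.length := by
    have h1 := level_add v
    have h2 := level_add (crv h w)
    have h4 : (crv h w).val.length = (croot h w).length := rfl
    omega
  have hq := Nat.div_add_mod (level (crv h w)) (h + 1)
  have hsv : level v % (h + 1) = level (crv h w) % (h + 1) - p.length := by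
    have he : level v = (level (crv h w) % (h + 1) - p.length) +
        (h + 1) * (level (crv h w) / (h + 1)) := by omega
    rw [he, Nat.add_mul_mod_self_left]
    exact Nat.mod_eq_of_lt (by omega)
  have hvS : v ∈ S r l h := by
    intro hdvd
    have := Nat.mod_eq_zero_of_dvd hdvd
    omega
  have hdd : dd h v = p.length := by
    rcases rootprop hw with hr | hr
    · unfold dd; rw [hsv, h3, hr]; omega
    · unfold dd
      rw [hsv, h3, hr]
      simp
      omega
  refine ⟨hvS, hdd, ?_⟩
  unfold croot
  rw [hdd]
  show (p ++ croot h w).drop p.length = croot h w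
  exact List.drop_left

lemma cons_append_inj {p q ρ : List (Fin r)} {a : Fin r} :
    p ++ ρ = a :: (q ++ ρ) ↔ p = a :: q := by
  constructor
  · intro hpq
    have hl : p.length = q.length + 1 := by
      have := congrArg List.length hpq; simp at this; omega
    cases p with
    | nil => simp at hl
    | cons b p' =>
      rw [List.cons_append] at hpq
      injection hpq with h1 h2
      rw [h1, List.append_cancel_right h2]
  · rintro rfl; simp

end RAryAux

/-- Deleting from the perfect `r`-ary tree of height `l` all
vertices on levels that are multiples of `⌈k/2⌉ + 1` leaves components that are
perfect `r`-ary trees of height at most `⌈k/2⌉ - 1`; in particular the result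
is in a failure state for `k`. -/
theorem raryTree_deletion_failure (r l k h : ℕ) (hr : 2 ≤ r) (hl : 1 ≤ l)
    (hk : 2 ≤ k) (hh : h = (k + 1) / 2)
    (V' : Set (RAryVert r l)) (hV' : V' = {w | (h + 1) ∣ level w}) :
    (∀ c : ((raryTree r l).induce V'ᶜ).ConnectedComponent,
        ∃ h' ≤ h - 1,
          Nonempty ((((raryTree r l).induce V'ᶜ).induce c.supp) ≃g raryTree r h')) ∧
      FailureState ((raryTree r l).induce V'ᶜ) k := by
  have hh1 : 1 ≤ h := by omega
  have h2k : 2 * h ≤ k + 1 := by omega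
  subst hV'
  have hS : ({w : RAryVert r l | (h + 1) ∣ level w})ᶜ = RAryAux.S r l h := by
    ext x; simp [RAryAux.S]
  rw [hS]
  constructor
  · intro c
    obtain ⟨w, hw0⟩ := c.exists_rep
    have hw : ((raryTree r l).induce (RAryAux.S r l h)).connectedComponentMk w = c := hw0
    set ρ : List (Fin r) := RAryAux.croot h w.val with hρ
    set sρ : ℕ := level (RAryAux.crv h w.val) % (h + 1) with hsρ
    set h' : ℕ := min (sρ - 1) (l - ρ.length) with hh'
    refine ⟨h', ?_, ?_⟩
    · have := RAryAux.sres_le (h := h) (RAryAux.crv h w.val); omega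
    have hmem : ∀ x : ↥(RAryAux.S r l h), x ∈ c.supp ↔ RAryAux.croot h x.val = ρ := by
      intro x
      rw [SimpleGraph.ConnectedComponent.mem_supp_iff, ← hw,
        SimpleGraph.ConnectedComponent.eq]
      constructor
      · exact fun hr => RAryAux.croot_eq_of_reachable hr
      · intro hcr
        obtain ⟨W, _⟩ := RAryAux.reach_of_croot_eq x.2 w.2 hcr
        exact ⟨W⟩
    have key1 : ∀ x : ↥(RAryAux.S r l h), x ∈ c.supp →
        x.val.val = x.val.val.take (RAryAux.dd h x.val) ++ ρ ∧
          RAryAux.dd h x.val ≤ h' := by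
      intro x hx
      have hcr := (hmem x).mp hx
      obtain ⟨e1, e2, e3⟩ := RAryAux.decomp_of_croot (h := h) x.2
      have hcrv : RAryAux.crv h x.val = RAryAux.crv h w.val := Subtype.ext hcr
      rw [hcrv] at e2
      rw [hcr] at e3
      refine ⟨by rw [← hcr]; exact e1, by omega⟩
    have hρlen : ρ.length ≤ l := RAryAux.croot_len_le w.val
    have hb1 : ρ.length = (RAryAux.croot h w.val).length := rfl
    have hlenf : ∀ p : List (Fin r), p.length ≤ h' → (p ++ ρ).length ≤ l := by
      intro p hp; simp only [List.length_append]; omega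
    have key2 : ∀ (p : List (Fin r)) (hp : p.length ≤ h'),
        (⟨p ++ ρ, hlenf p hp⟩ : RAryVert r l) ∈ RAryAux.S r l h ∧
          RAryAux.dd h (⟨p ++ ρ, hlenf p hp⟩ : RAryVert r l) = p.length ∧
          RAryAux.croot h (⟨p ++ ρ, hlenf p hp⟩ : RAryVert r l) = ρ :=
      fun p hp => RAryAux.decomp_to_croot w.2 p (by omega) (by omega) _
    refine ⟨⟨⟨fun x => ⟨x.val.val.val.take (RAryAux.dd h x.val.val),
        by
          rw [List.length_take]
          have := (key1 x.val x.prop).2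
          omega⟩,
      fun q => ⟨⟨⟨q.val ++ ρ, hlenf q.val q.prop⟩, (key2 q.val q.prop).1⟩,
        (hmem _).mpr (key2 q.val q.prop).2.2⟩,
      ?_, ?_⟩, ?_⟩⟩
    · -- left inverse
      intro x
      apply Subtype.ext
      apply Subtype.ext
      apply Subtype.ext
      show (x.val.val.val.take (RAryAux.dd h x.val.val)) ++ ρ = x.val.val.val
      exact ((key1 x.val x.prop).1).symm
    · -- right inverse
      intro q
      apply Subtype.ext
      show (q.val ++ ρ).take (RAryAux.dd h ⟨q.val ++ ρ, hlenf q.val q.prop⟩) = q.val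
      rw [(key2 q.val q.prop).2.1]
      exact List.take_left
    · -- map_rel_iff
      intro a b
      have Ha := (key1 a.val a.prop).1
      have Hb := (key1 b.val b.prop).1
      constructor
      · intro hadj
        rcases (RAryAux.raryTree_adj _ _).mp hadj with ⟨x, hx⟩ | ⟨x, hx⟩
        · show (raryTree r l).Adj a.val.val b.val.val
          refine Or.inl ⟨x, ?_⟩
          rw [Ha, Hb]
          have hx' : a.val.val.val.take (RAryAux.dd h a.val.val) =
              x :: b.val.val.val.take (RAryAux.dd h b.val.val) := hx
          rw [hx']
          simp
        · show (raryTree r l).Adj a.val.val b.val.val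
          refine Or.inr ⟨x, ?_⟩
          rw [Ha, Hb]
          have hx' : b.val.val.val.take (RAryAux.dd h b.val.val) =
              x :: a.val.val.val.take (RAryAux.dd h a.val.val) := hx
          rw [hx']
          simp
      · intro hadj
        have hadj' : (raryTree r l).Adj a.val.val b.val.val := hadj
        rcases hadj' with ⟨x, hx⟩ | ⟨x, hx⟩
        · rw [Ha, Hb] at hx
          exact Or.inl ⟨x, RAryAux.cons_append_inj.mp hx⟩
        · rw [Ha, Hb] at hx
          exact Or.inr ⟨x, RAryAux.cons_append_inj.mp hx⟩
  · intro u v hrch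
    have hc := RAryAux.croot_eq_of_reachable hrch
    obtain ⟨W, hW⟩ := RAryAux.reach_of_croot_eq u.2 v.2 hc
    have hd : ((raryTree r l).induce (RAryAux.S r l h)).dist u v ≤
        RAryAux.dd h u.val + RAryAux.dd h v.val := by
      rw [← hW]; exact SimpleGraph.dist_le W
    have b1 := RAryAux.dd_le_h (h := h) u.2
    have b2 := RAryAux.dd_le_h (h := h) v.2
    omega
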